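/- arXiv:0903.1348 — 4 statements merged into one kernel-verified Lean document; each statement's English description precedes it below -/
import Mathlib

section
/- Let θ ∈ (0, π/2], let f : ℝ → ℝ³ be a twice continuously differentiable curve with ‖f(v)‖ = 1 and ‖f'(v)‖ = 1 for all v ∈ ℝ, and for u > 0 set ξ(u) = cot θ · log u and r(u,v) = u·sin θ·(cos ξ(u) · f(v) + sin ξ(u) · (f(v) × f'(v))). Define N(u,v) = cos(ξ(u) − θ) · f(v) + sin(ξ(u) − θ) · (f(v) × f'(v)). Then for every u > 0 and v ∈ ℝ: ‖N(u,v)‖ = 1, N(u,v) is orthogonal to ∂r/∂u(u,v) and to ∂r/∂v(u,v), and ⟨N(u,v), r(u,v)⟩ = cos θ · ‖r(u,v)‖. In other words, the surface parametrized by r is a constant slope surface: its unit normal makes the constant angle θ with the position vector. -/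
open Real RealInnerProductSpace

/-- The cross product on Euclidean 3-space. -/
noncomputable def cross3 (a b : EuclideanSpace ℝ (Fin 3)) : EuclideanSpace ℝ (Fin 3) :=
  WithLp.toLp 2 ![a 1 * b 2 - a 2 * b 1, a 2 * b 0 - a 0 * b 2, a 0 * b 1 - a 1 * b 0]

lemma inner3 (x y : EuclideanSpace ℝ (Fin 3)) :
    ⟪x, y⟫ = x 0 * y 0 + x 1 * y 1 + x 2 * y 2 := by
  simp [PiLp.inner_apply, Fin.sum_univ_three]
  ring

lemma inner_cross_left (a b : EuclideanSpace ℝ (Fin 3)) : ⟪a, cross3 a b⟫ = (0:ℝ) := by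
  rw [inner3]; show a 0 * (a 1 * b 2 - a 2 * b 1) + a 1 * (a 2 * b 0 - a 0 * b 2)
    + a 2 * (a 0 * b 1 - a 1 * b 0) = 0
  ring

lemma inner_cross_right (a b : EuclideanSpace ℝ (Fin 3)) : ⟪b, cross3 a b⟫ = (0:ℝ) := by
  rw [inner3]; show b 0 * (a 1 * b 2 - a 2 * b 1) + b 1 * (a 2 * b 0 - a 0 * b 2)
    + b 2 * (a 0 * b 1 - a 1 * b 0) = 0
  ring

lemma inner_cross_cross (a b c d : EuclideanSpace ℝ (Fin 3)) :
    ⟪cross3 a b, cross3 c d⟫ = ⟪a,c⟫ * ⟪b,d⟫ - ⟪a,d⟫ * ⟪b,c⟫ := by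
  simp only [inner3]
  show (a 1 * b 2 - a 2 * b 1) * (c 1 * d 2 - c 2 * d 1)
    + (a 2 * b 0 - a 0 * b 2) * (c 2 * d 0 - c 0 * d 2)
    + (a 0 * b 1 - a 1 * b 0) * (c 0 * d 1 - c 1 * d 0) = _
  ring

lemma cross3_self (b : EuclideanSpace ℝ (Fin 3)) : cross3 b b = 0 := by
  ext i; fin_cases i <;>
    · show _ - _ = (0 : EuclideanSpace ℝ (Fin 3)) _
      simp [mul_comm]

lemma comp_E3 {F : ℝ → EuclideanSpace ℝ (Fin 3)} {D : EuclideanSpace ℝ (Fin 3)} {x : ℝ}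
    (h : HasDerivAt F D x) (i : Fin 3) : HasDerivAt (fun t => F t i) (D i) x := by
  have := (EuclideanSpace.proj (𝕜 := ℝ) i).hasFDerivAt.comp_hasDerivAt x h
  exact this

lemma hasDerivAt_E3 {F : ℝ → EuclideanSpace ℝ (Fin 3)} {D : EuclideanSpace ℝ (Fin 3)} {x : ℝ}
    (h : ∀ i, HasDerivAt (fun t => F t i) (D i) x) : HasDerivAt F D x := by
  have hpi : HasDerivAt (fun t => (fun i => F t i)) (fun i => D i) x := hasDerivAt_pi.2 h
  exact ((PiLp.continuousLinearEquiv 2 ℝ (fun _ : Fin 3 => ℝ)).symm.toContinuousLinearMap.hasFDerivAt.comp_hasDerivAt x hpi :)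

lemma hasDerivAt_cross {p q : ℝ → EuclideanSpace ℝ (Fin 3)} {p' q' : EuclideanSpace ℝ (Fin 3)}
    {x : ℝ} (hp : HasDerivAt p p' x) (hq : HasDerivAt q q' x) :
    HasDerivAt (fun t => cross3 (p t) (q t)) (cross3 p' (q x) + cross3 (p x) q') x := by
  apply hasDerivAt_E3
  intro i
  fin_cases i
  · have := ((comp_E3 hp 1).mul (comp_E3 hq 2)).sub ((comp_E3 hp 2).mul (comp_E3 hq 1))
    refine this.congr_deriv (Eq.symm ?_)
    show (cross3 p' (q x)) 0 + (cross3 (p x) q') 0 = _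
    show (p' 1 * q x 2 - p' 2 * q x 1) + (p x 1 * q' 2 - p x 2 * q' 1) = _
    ring
  · have := ((comp_E3 hp 2).mul (comp_E3 hq 0)).sub ((comp_E3 hp 0).mul (comp_E3 hq 2))
    refine this.congr_deriv (Eq.symm ?_)
    show (cross3 p' (q x)) 1 + (cross3 (p x) q') 1 = _
    show (p' 2 * q x 0 - p' 0 * q x 2) + (p x 2 * q' 0 - p x 0 * q' 2) = _
    ring
  · have := ((comp_E3 hp 0).mul (comp_E3 hq 1)).sub ((comp_E3 hp 1).mul (comp_E3 hq 0))
    refine this.congr_deriv (Eq.symm ?_)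
    show (cross3 p' (q x)) 2 + (cross3 (p x) q') 2 = _
    show (p' 0 * q x 1 - p' 1 * q x 0) + (p x 0 * q' 1 - p x 1 * q' 0) = _
    ring

lemma inner_deriv_zero {F : ℝ → EuclideanSpace ℝ (Fin 3)} (hF : Differentiable ℝ F)
    (h1 : ∀ t, ‖F t‖ = 1) (v : ℝ) : ⟪F v, deriv F v⟫ = (0:ℝ) := by
  have hd := (hF v).hasDerivAt
  have h := hd.inner ℝ hd
  have hc : (fun t => ⟪F t, F t⟫) = fun _ : ℝ => (1:ℝ) := funext fun t => by
    rw [real_inner_self_eq_norm_sq, h1, one_pow]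
  rw [hc] at h
  have h0 := h.unique (hasDerivAt_const v 1)
  have h2 := real_inner_comm (F v) (deriv F v)
  linarith

lemma norm_combo {a g : EuclideanSpace ℝ (Fin 3)} (haa : ⟪a,a⟫ = (1:ℝ))
    (hgg : ⟪g,g⟫ = (1:ℝ)) (hag : ⟪a,g⟫ = (0:ℝ)) {p q : ℝ} (hpq : p^2 + q^2 = 1) :
    ‖p • a + q • g‖ = 1 := by
  have hga : ⟪g,a⟫ = (0:ℝ) := by rw [real_inner_comm]; exact hag
  have h1 : ⟪p • a + q • g, p • a + q • g⟫ = (1:ℝ) := by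
    simp only [inner_add_left, inner_add_right, real_inner_smul_left, real_inner_smul_right,
      haa, hgg, hag, hga]
    linear_combination hpq
  have h2 : ‖p • a + q • g‖ ^ 2 = 1 := by rw [← real_inner_self_eq_norm_sq]; exact h1
  have hnn := norm_nonneg (p • a + q • g)
  refine le_antisymm ?_ ?_ <;> nlinarith [h2, hnn]

/-- The surface `r(u,v) = u sin θ (cos ξ(u) f(v) + sin ξ(u) f(v) × f'(v))`,
`ξ(u) = cot θ · log u`, built from a unit speed spherical curve `f`, is a constant
slope surface: its unit normal `N` makes the constant angle `θ` with the position vector. -/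
theorem constant_slope_surface (θ : ℝ) (hθ : θ ∈ Set.Ioc 0 (π / 2))
    (f : ℝ → EuclideanSpace ℝ (Fin 3)) (hf : ContDiff ℝ 2 f)
    (hf1 : ∀ v, ‖f v‖ = 1) (hf'1 : ∀ v, ‖deriv f v‖ = 1)
    (r N : ℝ → ℝ → EuclideanSpace ℝ (Fin 3))
    (hr : ∀ u v, 0 < u → r u v = (u * Real.sin θ) •
      (Real.cos (Real.cot θ * Real.log u) • f v +
       Real.sin (Real.cot θ * Real.log u) • cross3 (f v) (deriv f v)))
    (hN : ∀ u v, 0 < u → N u v =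
      Real.cos (Real.cot θ * Real.log u - θ) • f v +
      Real.sin (Real.cot θ * Real.log u - θ) • cross3 (f v) (deriv f v)) :
    ∀ u v, 0 < u →
      ‖N u v‖ = 1 ∧
      ⟪N u v, deriv (fun u' => r u' v) u⟫ = (0 : ℝ) ∧
      ⟪N u v, deriv (fun v' => r u v') v⟫ = (0 : ℝ) ∧
      ⟪N u v, r u v⟫ = Real.cos θ * ‖r u v‖ := by
  obtain ⟨hθ0, hθ2⟩ := hθ
  have hs : 0 < Real.sin θ := Real.sin_pos_of_pos_of_lt_pi hθ0 (by linarith [Real.pi_pos])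
  have hsne : Real.sin θ ≠ 0 := ne_of_gt hs
  have hfd : Differentiable ℝ f := hf.differentiable (by norm_num)
  have hf'c : ContDiff ℝ 1 (deriv f) := by
    have h21 : (2 : WithTop ℕ∞) = 1 + 1 := by norm_num
    rw [h21] at hf
    exact (contDiff_succ_iff_deriv.mp hf).2.2
  have hf'd : Differentiable ℝ (deriv f) := hf'c.differentiable one_ne_zero
  intro u v hu
  have hune : u ≠ 0 := ne_of_gt hu
  -- inner product facts
  have iaa : ⟪f v, f v⟫ = (1:ℝ) := by rw [real_inner_self_eq_norm_sq, hf1]; norm_num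
  have ibb : ⟪deriv f v, deriv f v⟫ = (1:ℝ) := by
    rw [real_inner_self_eq_norm_sq, hf'1]; norm_num
  have iab : ⟪f v, deriv f v⟫ = (0:ℝ) := inner_deriv_zero hfd hf1 v
  have iba : ⟪deriv f v, f v⟫ = (0:ℝ) := by rw [real_inner_comm]; exact iab
  have ibc : ⟪deriv f v, deriv (deriv f) v⟫ = (0:ℝ) := inner_deriv_zero hf'd hf'1 v
  have iag : ⟪f v, cross3 (f v) (deriv f v)⟫ = (0:ℝ) := inner_cross_left _ _
  have iga : ⟪cross3 (f v) (deriv f v), f v⟫ = (0:ℝ) := by rw [real_inner_comm]; exact iag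
  have ibg : ⟪deriv f v, cross3 (f v) (deriv f v)⟫ = (0:ℝ) := inner_cross_right _ _
  have igb : ⟪cross3 (f v) (deriv f v), deriv f v⟫ = (0:ℝ) := by rw [real_inner_comm]; exact ibg
  have igg : ⟪cross3 (f v) (deriv f v), cross3 (f v) (deriv f v)⟫ = (1:ℝ) := by
    rw [inner_cross_cross, iaa, ibb, iab]; ring
  have iac' : ⟪f v, cross3 (f v) (deriv (deriv f) v)⟫ = (0:ℝ) := inner_cross_left _ _
  have igc' : ⟪cross3 (f v) (deriv f v), cross3 (f v) (deriv (deriv f) v)⟫ = (0:ℝ) := by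
    rw [inner_cross_cross, iaa, ibc, iba]; ring
  have hNv := hN u v hu
  refine ⟨?_, ?_, ?_, ?_⟩
  · rw [hNv]
    exact norm_combo iaa igg iag (by
      have := Real.sin_sq_add_cos_sq (Real.cot θ * Real.log u - θ); linarith)
  · -- u-derivative
    have hlog := Real.hasDerivAt_log hune
    have hkl : HasDerivAt (fun u' => Real.cot θ * Real.log u') (Real.cot θ * u⁻¹) u :=
      hlog.const_mul _
    have hc1 := hkl.cos
    have hs1 := hkl.sin
    have hid : HasDerivAt (fun u' : ℝ => u' * Real.sin θ) (Real.sin θ) u := by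
      simpa using (hasDerivAt_id u).mul_const (Real.sin θ)
    have hφ1 := hid.mul hc1
    have hφ2 := hid.mul hs1
    have hD := (hφ1.smul_const (f v)).add (hφ2.smul_const (cross3 (f v) (deriv f v)))
    have hfun : (fun u' => (u' * Real.sin θ) •
        (Real.cos (Real.cot θ * Real.log u') • f v +
         Real.sin (Real.cot θ * Real.log u') • cross3 (f v) (deriv f v)))
        = (fun u' => (u' * Real.sin θ * Real.cos (Real.cot θ * Real.log u')) • f v +
           (u' * Real.sin θ * Real.sin (Real.cot θ * Real.log u')) •
             cross3 (f v) (deriv f v)) := by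
      funext u'; rw [smul_add, smul_smul, smul_smul]
    have hee : (fun u' => r u' v) =ᶠ[nhds u] (fun u' => (u' * Real.sin θ) •
        (Real.cos (Real.cot θ * Real.log u') • f v +
         Real.sin (Real.cot θ * Real.log u') • cross3 (f v) (deriv f v))) :=
      Filter.eventuallyEq_of_mem (Ioi_mem_nhds hu) (fun x hx => hr x v hx)
    have hde : deriv (fun u' => r u' v) u
        = (Real.sin θ * Real.cos (Real.cot θ * Real.log u) +
            u * Real.sin θ * (-Real.sin (Real.cot θ * Real.log u) * (Real.cot θ * u⁻¹))) • f v +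
          (Real.sin θ * Real.sin (Real.cot θ * Real.log u) +
            u * Real.sin θ * (Real.cos (Real.cot θ * Real.log u) * (Real.cot θ * u⁻¹))) •
            cross3 (f v) (deriv f v) := by
      rw [hee.deriv_eq, hfun]
      exact hD.deriv
    rw [hNv, hde]
    simp only [inner_add_left, inner_add_right, real_inner_smul_left, real_inner_smul_right,
      iaa, igg, iag, iga]
    rw [Real.cos_sub, Real.sin_sub]
    generalize Real.cos (Real.cot θ * Real.log u) = p
    generalize Real.sin (Real.cot θ * Real.log u) = q
    rw [Real.cot_eq_cos_div_sin]
    field_simp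
    ring
  · -- v-derivative
    have hgd : HasDerivAt (fun t => cross3 (f t) (deriv f t))
        (cross3 (deriv f v) (deriv f v) + cross3 (f v) (deriv (deriv f) v)) v :=
      hasDerivAt_cross (hfd v).hasDerivAt (hf'd v).hasDerivAt
    have hGd := (((hfd v).hasDerivAt.const_smul
        (Real.cos (Real.cot θ * Real.log u))).add
        (hgd.const_smul (Real.sin (Real.cot θ * Real.log u)))).const_smul (u * Real.sin θ)
    have hfe : (fun v' => r u v') = (fun v' => (u * Real.sin θ) •
        (Real.cos (Real.cot θ * Real.log u) • f v' +
         Real.sin (Real.cot θ * Real.log u) • cross3 (f v') (deriv f v'))) :=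
      funext fun v' => hr u v' hu
    rw [hNv, hfe]; erw [hGd.deriv]
    rw [cross3_self, zero_add]
    simp only [inner_add_left, inner_add_right, real_inner_smul_left, real_inner_smul_right,
      iab, iba, igb, iac', igc']
    ring
  · -- angle with position vector
    have hw : ‖Real.cos (Real.cot θ * Real.log u) • f v +
        Real.sin (Real.cot θ * Real.log u) • cross3 (f v) (deriv f v)‖ = 1 :=
      norm_combo iaa igg iag (by
        have := Real.sin_sq_add_cos_sq (Real.cot θ * Real.log u); linarith)
    rw [hNv, hr u v hu, norm_smul, hw, mul_one, Real.norm_eq_abs,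
      abs_of_pos (mul_pos hu hs)]
    simp only [inner_add_left, inner_add_right, real_inner_smul_left, real_inner_smul_right,
      iaa, igg, iag, iga]
    rw [Real.cos_sub, Real.sin_sub]
    linear_combination (u * Real.sin θ * Real.cos θ) * Real.sin_sq_add_cos_sq (Real.cot θ * Real.log u)
end

section
/- Let θ ∈ (0, π/2], let f : ℝ → ℝ³ be a twice continuously differentiable curve with ‖f(v)‖ = 1 and ‖f'(v)‖ = 1 for all v ∈ ℝ, and for u > 0 set ξ(u) = cot θ · log u and r(u,v) = u·sin θ·(cos ξ(u) · f(v) + sin ξ(u) · (f(v) × f'(v))). Then for every u > 0 and v ∈ ℝ the partial derivative of r with respect to u equals −sin(ξ(u) − θ) · f(v) + cos(ξ(u) − θ) · (f(v) × f'(v)), and in particular ‖∂r/∂u(u,v)‖ = 1. -/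
open Real RealInnerProductSpace

lemma inner_cross_self (a b : EuclideanSpace ℝ (Fin 3)) : ⟪a, cross3 a b⟫ = 0 := by
  simp only [cross3, PiLp.inner_apply, RCLike.inner_apply, conj_trivial, Fin.sum_univ_three]
  simp [Matrix.cons_val_zero, Matrix.cons_val_one, Matrix.head_cons]
  ring

lemma cross_norm_sq (a b : EuclideanSpace ℝ (Fin 3)) :
    ⟪cross3 a b, cross3 a b⟫ = ⟪a, a⟫ * ⟪b, b⟫ - ⟪a, b⟫ ^ 2 := by
  simp only [cross3, PiLp.inner_apply, RCLike.inner_apply, conj_trivial, Fin.sum_univ_three]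
  simp [Matrix.cons_val_zero, Matrix.cons_val_one, Matrix.head_cons]
  ring

/-- `∂r/∂u = −sin(ξ−θ) f + cos(ξ−θ) f × f'`, and in particular it is a unit vector. -/
theorem deriv_u_constant_slope (θ : ℝ) (hθ : θ ∈ Set.Ioc 0 (π / 2))
    (f : ℝ → EuclideanSpace ℝ (Fin 3)) (hf : ContDiff ℝ 2 f)
    (hf1 : ∀ v, ‖f v‖ = 1) (hf'1 : ∀ v, ‖deriv f v‖ = 1)
    (r : ℝ → ℝ → EuclideanSpace ℝ (Fin 3))
    (hr : ∀ u v, 0 < u → r u v = (u * Real.sin θ) •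
      (Real.cos (Real.cot θ * Real.log u) • f v +
       Real.sin (Real.cot θ * Real.log u) • cross3 (f v) (deriv f v)))
    :
    ∀ u v, 0 < u →
      deriv (fun u' => r u' v) u =
        (-Real.sin (Real.cot θ * Real.log u - θ)) • f v +
        Real.cos (Real.cot θ * Real.log u - θ) • cross3 (f v) (deriv f v) ∧
      ‖deriv (fun u' => r u' v) u‖ = 1 := by
  have hθpos := hθ.1
  have hθlt : θ < π := lt_of_le_of_lt hθ.2 (by linarith [Real.pi_pos])
  have hs : Real.sin θ ≠ 0 := ne_of_gt (Real.sin_pos_of_pos_of_lt_pi hθpos hθlt)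
  have hc : Real.cot θ * Real.sin θ = Real.cos θ := by
    rw [Real.cot_eq_cos_div_sin]; field_simp
  intro u v hu
  set c := Real.cot θ with hcdef
  set A := f v with hA
  set B := cross3 (f v) (deriv f v) with hB
  -- derivative computation
  have hfd : Differentiable ℝ f := hf.differentiable (by norm_num)
  have hinner0 : ⟪A, deriv f v⟫ = 0 := by
    have hd : ∀ t, HasDerivAt f (deriv f t) t := fun t => (hfd t).hasDerivAt
    have hcst : (fun t => ⟪f t, f t⟫) = fun _ => (1 : ℝ) := by
      funext t
      rw [real_inner_self_eq_norm_sq, hf1 t]; norm_num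
    have : HasDerivAt (fun t => ⟪f t, f t⟫)
        (⟪f v, deriv f v⟫ + ⟪deriv f v, f v⟫) v := (hd v).inner ℝ (hd v)
    have h0 : deriv (fun t => ⟪f t, f t⟫) v = 0 := by
      rw [hcst]; simp
    have h2 := this.deriv
    rw [h0] at h2
    rw [real_inner_comm (f v) (deriv f v)] at h2
    rw [hA]
    linarith
  have hBnorm : ‖B‖ = 1 := by
    have := cross_norm_sq (f v) (deriv f v)
    rw [real_inner_self_eq_norm_sq, real_inner_self_eq_norm_sq, real_inner_self_eq_norm_sq,
      hf1 v, hf'1 v, hinner0] at this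
    nlinarith [norm_nonneg B, this]
  have hAB : ⟪A, B⟫ = 0 := inner_cross_self (f v) (deriv f v)
  -- the scalar derivatives
  have hlog : HasDerivAt Real.log u⁻¹ u := Real.hasDerivAt_log hu.ne'
  have hξ : HasDerivAt (fun u' => c * Real.log u') (c * u⁻¹) u := hlog.const_mul c
  have h1 : HasDerivAt (fun u' => u' * Real.sin θ) (Real.sin θ) u := by
    simpa using (hasDerivAt_id u).mul_const (Real.sin θ)
  have hcos : HasDerivAt (fun u' => Real.cos (c * Real.log u'))
      (-Real.sin (c * Real.log u) * (c * u⁻¹)) u := hξ.cos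
  have hsin : HasDerivAt (fun u' => Real.sin (c * Real.log u'))
      (Real.cos (c * Real.log u) * (c * u⁻¹)) u := hξ.sin
  have hφ1 : HasDerivAt (fun u' => u' * Real.sin θ * Real.cos (c * Real.log u'))
      (Real.sin θ * Real.cos (c * Real.log u)
        + (u * Real.sin θ) * (-Real.sin (c * Real.log u) * (c * u⁻¹))) u := h1.mul hcos
  have hφ2 : HasDerivAt (fun u' => u' * Real.sin θ * Real.sin (c * Real.log u'))
      (Real.sin θ * Real.sin (c * Real.log u)
        + (u * Real.sin θ) * (Real.cos (c * Real.log u) * (c * u⁻¹))) u := h1.mul hsin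
  have e1 : Real.sin θ * Real.cos (c * Real.log u)
        + (u * Real.sin θ) * (-Real.sin (c * Real.log u) * (c * u⁻¹))
      = -Real.sin (c * Real.log u - θ) := by
    rw [Real.sin_sub]
    field_simp
    rw [← hc]
    ring
  have e2 : Real.sin θ * Real.sin (c * Real.log u)
        + (u * Real.sin θ) * (Real.cos (c * Real.log u) * (c * u⁻¹))
      = Real.cos (c * Real.log u - θ) := by
    rw [Real.cos_sub]
    field_simp
    rw [← hc]
    ring
  have hg : HasDerivAt (fun u' => (u' * Real.sin θ * Real.cos (c * Real.log u')) • A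
        + (u' * Real.sin θ * Real.sin (c * Real.log u')) • B)
      ((-Real.sin (c * Real.log u - θ)) • A + Real.cos (c * Real.log u - θ) • B) u := by
    have := (hφ1.smul_const A).add (hφ2.smul_const B)
    rwa [e1, e2] at this
  have heq : (fun u' => r u' v) =ᶠ[nhds u]
      (fun u' => (u' * Real.sin θ * Real.cos (c * Real.log u')) • A
        + (u' * Real.sin θ * Real.sin (c * Real.log u')) • B) := by
    filter_upwards [IsOpen.mem_nhds isOpen_Ioi hu] with x hx
    rw [hr x v hx, smul_add, smul_smul, smul_smul]
  have hderiv : deriv (fun u' => r u' v) u =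
      (-Real.sin (c * Real.log u - θ)) • A + Real.cos (c * Real.log u - θ) • B := by
    rw [heq.deriv_eq]
    exact hg.deriv
  refine ⟨hderiv, ?_⟩
  rw [hderiv]
  have hsq : ‖(-Real.sin (c * Real.log u - θ)) • A + Real.cos (c * Real.log u - θ) • B‖ ^ 2
      = 1 := by
    rw [← real_inner_self_eq_norm_sq]
    simp only [inner_add_add_self, real_inner_smul_left, real_inner_smul_right]
    rw [real_inner_self_eq_norm_sq, real_inner_self_eq_norm_sq, hBnorm, hf1 v, hAB]
    have hBA : ⟪B, A⟫ = 0 := by rw [real_inner_comm]; exact hAB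
    rw [hBA]
    have := Real.sin_sq_add_cos_sq (c * Real.log u - θ)
    nlinarith [this]
  nlinarith [norm_nonneg ((-Real.sin (c * Real.log u - θ)) • A + Real.cos (c * Real.log u - θ) • B), hsq]
end

section
/- Let θ ∈ (0, π/2], let f : ℝ → ℝ³ be a twice continuously differentiable curve with ‖f(v)‖ = 1 and ‖f'(v)‖ = 1 for all v ∈ ℝ, and for u > 0 set ξ(u) = cot θ · log u and r(u,v) = u·sin θ·(cos ξ(u) · f(v) + sin ξ(u) · (f(v) × f'(v))). Define N(u,v) = cos(ξ(u) − θ) · f(v) + sin(ξ(u) − θ) · (f(v) × f'(v)). Then the position vector decomposes as r(u,v) = u·sin²θ · ∂r/∂u(u,v) + u·sin θ·cos θ · N(u,v) for all u > 0 and v ∈ ℝ. -/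
open Real RealInnerProductSpace

/-- The position vector decomposes as
`r = u sin²θ · ∂r/∂u + u sin θ cos θ · N`. -/
theorem position_decomposition_constant_slope (θ : ℝ) (hθ : θ ∈ Set.Ioc 0 (π / 2))
    (f : ℝ → EuclideanSpace ℝ (Fin 3)) (hf : ContDiff ℝ 2 f)
    (hf1 : ∀ v, ‖f v‖ = 1) (hf'1 : ∀ v, ‖deriv f v‖ = 1)
    (r : ℝ → ℝ → EuclideanSpace ℝ (Fin 3))
    (hr : ∀ u v, 0 < u → r u v = (u * Real.sin θ) •
      (Real.cos (Real.cot θ * Real.log u) • f v +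
       Real.sin (Real.cot θ * Real.log u) • cross3 (f v) (deriv f v)))
    (N : ℝ → ℝ → EuclideanSpace ℝ (Fin 3))
    (hN : ∀ u v, 0 < u → N u v =
      Real.cos (Real.cot θ * Real.log u - θ) • f v +
      Real.sin (Real.cot θ * Real.log u - θ) • cross3 (f v) (deriv f v)) :
    ∀ u v, 0 < u →
      r u v = (u * Real.sin θ ^ 2) • deriv (fun u' => r u' v) u +
        (u * Real.sin θ * Real.cos θ) • N u v := by
  intro u v hu
  set c := Real.cot θ with hc
  set F := f v
  set g := cross3 (f v) (deriv f v)
  set ξ := c * Real.log u with hξ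
  have hsp : 0 < Real.sin θ := Real.sin_pos_of_pos_of_lt_pi hθ.1 (lt_of_le_of_lt hθ.2 (by linarith [Real.pi_pos]))
  have hs : Real.sin θ ≠ 0 := hsp.ne'
  have hcot : c * Real.sin θ = Real.cos θ := by
    rw [hc, Real.cot_eq_cos_div_sin]; field_simp
  have hlog : HasDerivAt (fun x : ℝ => c * Real.log x) (c * u⁻¹) u :=
    (Real.hasDerivAt_log hu.ne').const_mul c
  have h1 : HasDerivAt (fun x : ℝ => (x * Real.sin θ) * Real.cos (c * Real.log x))
      (Real.sin θ * Real.cos ξ - c * Real.sin θ * Real.sin ξ) u := by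
    have := ((hasDerivAt_id u).mul_const (Real.sin θ)).mul hlog.cos
    refine this.congr_deriv ?_
    simp only [hξ, id]
    field_simp
    ring
  have h2 : HasDerivAt (fun x : ℝ => (x * Real.sin θ) * Real.sin (c * Real.log x))
      (Real.sin θ * Real.sin ξ + c * Real.sin θ * Real.cos ξ) u := by
    have := ((hasDerivAt_id u).mul_const (Real.sin θ)).mul hlog.sin
    refine this.congr_deriv ?_
    simp only [hξ, id]
    field_simp
  have hφ : HasDerivAt (fun x : ℝ =>
      ((x * Real.sin θ) * Real.cos (c * Real.log x)) • F +
      ((x * Real.sin θ) * Real.sin (c * Real.log x)) • g)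
      ((Real.sin θ * Real.cos ξ - c * Real.sin θ * Real.sin ξ) • F +
       (Real.sin θ * Real.sin ξ + c * Real.sin θ * Real.cos ξ) • g) u :=
    (h1.smul_const F).add (h2.smul_const g)
  have heq : (fun u' => r u' v) =ᶠ[nhds u] (fun x : ℝ =>
      ((x * Real.sin θ) * Real.cos (c * Real.log x)) • F +
      ((x * Real.sin θ) * Real.sin (c * Real.log x)) • g) := by
    filter_upwards [Ioi_mem_nhds hu] with x hx
    rw [hr x v hx, smul_add, smul_smul, smul_smul]
  have hd : deriv (fun u' => r u' v) u =
      (Real.sin θ * Real.cos ξ - c * Real.sin θ * Real.sin ξ) • F +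
      (Real.sin θ * Real.sin ξ + c * Real.sin θ * Real.cos ξ) • g := by
    rw [heq.deriv_eq]; exact hφ.deriv
  rw [hr u v hu, hN u v hu, hd, Real.cos_sub, Real.sin_sub]
  match_scalars
  · linear_combination (-(u * Real.sin θ * Real.cos ξ)) * (Real.sin_sq_add_cos_sq θ) +
      (u * Real.sin θ ^ 2 * Real.sin ξ) * hcot
  · linear_combination (-(u * Real.sin θ * Real.sin ξ)) * (Real.sin_sq_add_cos_sq θ) -
      (u * Real.sin θ ^ 2 * Real.cos ξ) * hcot
end

section
/- Let θ ∈ (0, π/2], let f : ℝ → ℝ³ be a twice continuously differentiable curve with ‖f(v)‖ = 1 and ‖f'(v)‖ = 1 for all v ∈ ℝ, and for u > 0 set ξ(u) = cot θ · log u and r(u,v) = u·sin θ·(cos ξ(u) · f(v) + sin ξ(u) · (f(v) × f'(v))). Then the second partial derivative of r with respect to u satisfies ∂²r/∂u²(u,v) = −(cot θ / u) · N(u,v) for all u > 0 and v ∈ ℝ, where N(u,v) = cos(ξ(u) − θ) · f(v) + sin(ξ(u) − θ) · (f(v) × f'(v)) is the unit normal of the surface. -/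
open Real RealInnerProductSpace

/-- `∂²r/∂u² = −(cot θ / u) · N(u,v)`. -/
theorem second_deriv_u_constant_slope (θ : ℝ) (hθ : θ ∈ Set.Ioc 0 (π / 2))
    (f : ℝ → EuclideanSpace ℝ (Fin 3)) (hf : ContDiff ℝ 2 f)
    (hf1 : ∀ v, ‖f v‖ = 1) (hf'1 : ∀ v, ‖deriv f v‖ = 1)
    (r : ℝ → ℝ → EuclideanSpace ℝ (Fin 3))
    (hr : ∀ u v, 0 < u → r u v = (u * Real.sin θ) •
      (Real.cos (Real.cot θ * Real.log u) • f v +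
       Real.sin (Real.cot θ * Real.log u) • cross3 (f v) (deriv f v)))
    (N : ℝ → ℝ → EuclideanSpace ℝ (Fin 3))
    (hN : ∀ u v, 0 < u → N u v =
      Real.cos (Real.cot θ * Real.log u - θ) • f v +
      Real.sin (Real.cot θ * Real.log u - θ) • cross3 (f v) (deriv f v)) :
    ∀ u v, 0 < u →
      deriv (fun u' => deriv (fun u'' => r u'' v) u') u =
        (-(Real.cot θ / u)) • N u v := by
  intro u v hu
  have hπ : θ < π := lt_of_le_of_lt hθ.2 (by linarith [Real.pi_pos])
  have hs : Real.sin θ ≠ 0 := (Real.sin_pos_of_pos_of_lt_pi hθ.1 hπ).ne'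
  set c := Real.cot θ with hcdef
  set s := Real.sin θ with hsdef
  set F := f v
  set G := cross3 (f v) (deriv f v)
  have hL : ∀ x : ℝ, 0 < x → HasDerivAt (fun t => c * Real.log t) (c / x) x := by
    intro x hx
    simpa [div_eq_mul_inv] using (Real.hasDerivAt_log hx.ne').const_mul c
  -- first derivative function
  set g : ℝ → EuclideanSpace ℝ (Fin 3) := fun x =>
    (s * Real.cos (c * Real.log x) - s * c * Real.sin (c * Real.log x)) • F +
    (s * Real.sin (c * Real.log x) + s * c * Real.cos (c * Real.log x)) • G with hg
  have step1 : ∀ x : ℝ, 0 < x → HasDerivAt (fun t => r t v) (g x) x := by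
    intro x hx
    have hA : HasDerivAt (fun t => t * s * Real.cos (c * Real.log t))
        (s * Real.cos (c * Real.log x) - s * c * Real.sin (c * Real.log x)) x := by
      have h1 := ((hasDerivAt_id x).mul_const s).mul
        ((Real.hasDerivAt_cos (c * Real.log x)).comp x (hL x hx))
      refine h1.congr_deriv ?_
      simp only [Function.comp_apply, id]
      field_simp
      ring
    have hB : HasDerivAt (fun t => t * s * Real.sin (c * Real.log t))
        (s * Real.sin (c * Real.log x) + s * c * Real.cos (c * Real.log x)) x := by
      have h1 := ((hasDerivAt_id x).mul_const s).mul
        ((Real.hasDerivAt_sin (c * Real.log x)).comp x (hL x hx))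
      refine h1.congr_deriv ?_
      simp only [Function.comp_apply, id]
      field_simp
    have hvec : HasDerivAt (fun t =>
        (t * s * Real.cos (c * Real.log t)) • F + (t * s * Real.sin (c * Real.log t)) • G)
        (g x) x := (hA.smul_const F).add (hB.smul_const G)
    refine hvec.congr_of_eventuallyEq ?_
    filter_upwards [Ioi_mem_nhds hx] with t ht
    rw [hr t v ht]
    simp [smul_add, smul_smul]
    rfl
  have hderiveq : (fun u' => deriv (fun u'' => r u'' v) u') =ᶠ[nhds u] g := by
    filter_upwards [Ioi_mem_nhds hu] with x hx
    exact (step1 x hx).deriv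
  -- second derivative
  have hA2 : HasDerivAt (fun t => s * Real.cos (c * Real.log t) - s * c * Real.sin (c * Real.log t))
      (-(s * Real.sin (c * Real.log u) * (c / u)) - s * c * (Real.cos (c * Real.log u) * (c / u))) u := by
    have h1 := (((Real.hasDerivAt_cos (c * Real.log u)).comp u (hL u hu)).const_mul s).sub
      (((Real.hasDerivAt_sin (c * Real.log u)).comp u (hL u hu)).const_mul (s * c))
    refine h1.congr_deriv ?_
    ring
  have hB2 : HasDerivAt (fun t => s * Real.sin (c * Real.log t) + s * c * Real.cos (c * Real.log t))
      (s * Real.cos (c * Real.log u) * (c / u) - s * c * (Real.sin (c * Real.log u) * (c / u))) u := by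
    have h1 := (((Real.hasDerivAt_sin (c * Real.log u)).comp u (hL u hu)).const_mul s).add
      (((Real.hasDerivAt_cos (c * Real.log u)).comp u (hL u hu)).const_mul (s * c))
    refine h1.congr_deriv ?_
    ring
  have hg2 : HasDerivAt g
      ((-(s * Real.sin (c * Real.log u) * (c / u)) - s * c * (Real.cos (c * Real.log u) * (c / u))) • F +
       (s * Real.cos (c * Real.log u) * (c / u) - s * c * (Real.sin (c * Real.log u) * (c / u))) • G) u :=
    (hA2.smul_const F).add (hB2.smul_const G)
  rw [Filter.EventuallyEq.deriv_eq hderiveq, hg2.deriv, hN u v hu]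
  rw [smul_add, smul_smul, smul_smul]
  have hc : c = Real.cos θ / s := Real.cot_eq_cos_div_sin θ
  congr 1
  · congr 1
    rw [Real.cos_sub, hc]
    field_simp
    ring
  · congr 1
    rw [Real.sin_sub, hc]
    field_simp
    ring
end
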